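/- Let E be a set of prime numbers with the sum of 1/p over p ∈ E finite, and let α = a/b > 1 be a rational number that is not an integer (a, b positive integers, b > 1, gcd(a,b) = 1). Then for every δ > 0 there exist a positive integer m and positive integers x, y, neither of which is divisible by any prime in E, such that 0 < |α^m · x − y| < δ. -/

import Mathlib

open Finset

lemma zmod2_cases : ∀ x : ZMod 2, x = 0 ∨ x = 1 := by decide
lemma zmod2_add1 : ∀ x : ZMod 2, x + 1 + x ≠ 0 := by decide

lemma modeq_dvd_iff {p u v : ℕ} (h : u ≡ v [MOD p]) : p ∣ u ↔ p ∣ v := by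
  rw [← Nat.modEq_zero_iff_dvd, ← Nat.modEq_zero_iff_dvd]
  exact ⟨h.symm.trans, h.trans⟩

lemma tail_small (E : Set ℕ)
    (hsum : Summable (fun p : E => (1 : ℝ) / ((p : ℕ) : ℝ))) (ε : ℝ) (hε : 0 < ε) :
    ∃ P : ℕ, ∀ T : Finset ℕ, (∀ q ∈ T, q ∈ E ∧ P < q) → ∑ q ∈ T, (1:ℝ)/q < ε := by
  classical
  rw [summable_iff_vanishing] at hsum
  obtain ⟨s, hs⟩ := hsum (Metric.ball 0 ε) (Metric.ball_mem_nhds 0 hε)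
  refine ⟨s.sup (fun p => (p : ℕ)), fun T hT => ?_⟩
  have hTE : ∀ q ∈ T, q ∈ E := fun q hq => (hT q hq).1
  set T' : Finset E := T.attach.map ⟨fun q => (⟨q.1, hTE q.1 q.2⟩ : E), by
    intro x y hxy
    simp only [Subtype.mk.injEq] at hxy
    exact Subtype.ext hxy⟩ with hT'
  have hdisj : Disjoint T' s := by
    rw [Finset.disjoint_left]
    intro q hq1 hq2
    rw [hT', Finset.mem_map] at hq1
    obtain ⟨⟨x, hx⟩, _, hx2⟩ := hq1
    have hxq : x = (q : ℕ) := congrArg Subtype.val hx2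
    have h2 := (hT x hx).2
    have h3 : (q : ℕ) ≤ s.sup (fun p => (p:ℕ)) := Finset.le_sup (f := fun p : E => (p : ℕ)) hq2
    omega
  have hmem := hs T' hdisj
  rw [Metric.mem_ball, dist_zero_right, Real.norm_eq_abs] at hmem
  have hsum_eq : ∑ p ∈ T', (1:ℝ)/((p:ℕ):ℝ) = ∑ q ∈ T, (1:ℝ)/q := by
    rw [hT', Finset.sum_map]
    exact Finset.sum_attach T (fun q => (1:ℝ)/q)
  rw [hsum_eq] at hmem
  exact lt_of_le_of_lt (le_abs_self _) hmem

lemma crt_finset (s : Finset ℕ) (hp : ∀ p ∈ s, p.Prime) (F : ℕ → ℕ → Prop)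
    (hF : ∀ p k k', k ≡ k' [MOD p] → F p k → F p k')
    (hex : ∀ p ∈ s, ∃ r, F p r) : ∃ k, ∀ p ∈ s, F p k := by
  classical
  induction s using Finset.induction with
  | empty => exact ⟨0, fun p hp => absurd hp (Finset.notMem_empty p)⟩
  | @insert q t hq ih =>
    obtain ⟨k, hk⟩ := ih (fun p hps => hp p (Finset.mem_insert_of_mem hps))
      (fun p hps => hex p (Finset.mem_insert_of_mem hps))
    obtain ⟨r, hr⟩ := hex q (Finset.mem_insert_self q t)
    have hcop : Nat.Coprime q (∏ p ∈ t, p) := by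
      refine Nat.Coprime.prod_right fun p hps => ?_
      exact (Nat.coprime_primes (hp q (Finset.mem_insert_self q t))
        (hp p (Finset.mem_insert_of_mem hps))).mpr (fun h => hq (h ▸ hps))
    obtain ⟨k', hk'1, hk'2⟩ := Nat.chineseRemainder hcop r k
    refine ⟨k', fun p hps => ?_⟩
    rcases Finset.mem_insert.mp hps with rfl | hps
    · exact hF p r k' hk'1.symm hr
    · have hdvd : p ∣ ∏ x ∈ t, x := Finset.dvd_prod_of_mem _ hps
      exact hF p k k' (hk'2.of_dvd hdvd).symm (hk p hps)

lemma exists_good_res (p : ℕ) (hp : p.Prime) (a b m f e N : ℕ) (hm : 0 < m)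
    (hab : Nat.Coprime a b) (key : a ^ m * f = b ^ m * e + N)
    (hN2 : ∀ q : ℕ, q.Prime → q ∣ a * b → ¬ q ∣ N)
    (hNpar : ¬ 2 ∣ a * b → 2 ∣ N) :
    ∃ r : ℕ, ¬ p ∣ (b ^ m * r + f) ∧ ¬ p ∣ (a ^ m * r + e) := by
  classical
  haveI : Fact p.Prime := ⟨hp⟩
  have castdvd : ∀ n : ℕ, ((n : ZMod p) = 0) ↔ p ∣ n := fun n =>
    ZMod.natCast_eq_zero_iff n p
  set A : ZMod p := (a : ZMod p) ^ m with hA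
  set B : ZMod p := (b : ZMod p) ^ m with hB
  set F : ZMod p := (f : ZMod p) with hF
  set E' : ZMod p := (e : ZMod p) with hE'
  have keyK : A * F = B * E' + (N : ZMod p) := by
    have := congrArg (fun n : ℕ => (n : ZMod p)) key
    push_cast at this
    simpa [hA, hB, hF, hE'] using this
  have hAa : A = 0 ↔ p ∣ a := by
    rw [hA, pow_eq_zero_iff hm.ne', castdvd]
  have hBb : B = 0 ↔ p ∣ b := by
    rw [hB, pow_eq_zero_iff hm.ne', castdvd]
  have claim1 : ¬ (B = 0 ∧ F = 0) := by
    rintro ⟨hB0, hF0⟩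
    have hpb : p ∣ b := hBb.mp hB0
    have hcast : (N : ZMod p) = 0 := by
      have h := keyK
      rw [hB0, hF0, mul_zero, zero_mul, zero_add] at h
      exact h.symm
    exact hN2 p hp (Dvd.dvd.mul_left hpb a) ((castdvd N).mp hcast)
  have claim2 : ¬ (A = 0 ∧ E' = 0) := by
    rintro ⟨hA0, hE0⟩
    have hpa : p ∣ a := hAa.mp hA0
    have hcast : (N : ZMod p) = 0 := by
      have h := keyK
      rw [hA0, hE0, mul_zero, zero_mul, zero_add] at h
      exact h.symm
    exact hN2 p hp (Dvd.dvd.mul_right hpa b) ((castdvd N).mp hcast)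
  suffices h : ∃ r : ZMod p, B * r + F ≠ 0 ∧ A * r + E' ≠ 0 by
    obtain ⟨r, hr1, hr2⟩ := h
    refine ⟨r.val, ?_, ?_⟩
    · rw [← castdvd]
      push_cast
      rw [ZMod.natCast_val, ZMod.cast_id]
      exact hr1
    · rw [← castdvd]
      push_cast
      rw [ZMod.natCast_val, ZMod.cast_id]
      exact hr2
  by_cases hp2 : p = 2
  · subst hp2
    by_cases h2 : 2 ∣ a * b
    · rcases (Nat.Prime.dvd_mul Nat.prime_two).mp h2 with h2a | h2b
      · have hA0 : A = 0 := hAa.mpr h2a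
        have hBne : B ≠ 0 := by
          intro hB0
          have h2b := hBb.mp hB0
          have : (2:ℕ) ∣ Nat.gcd a b := Nat.dvd_gcd h2a h2b
          rw [hab] at this; omega
        have hB1 : B = 1 := by
          rcases zmod2_cases B with h | h
          exacts [absurd h hBne, h]
        have hEne : E' ≠ 0 := fun h => claim2 ⟨hA0, h⟩
        refine ⟨F + 1, ?_, ?_⟩
        · rw [hB1, one_mul]
          exact zmod2_add1 F
        · rw [hA0, zero_mul, zero_add]; exact hEne
      · have hB0 : B = 0 := hBb.mpr h2b
        have hAne : A ≠ 0 := by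
          intro hA0
          have h2a := hAa.mp hA0
          have : (2:ℕ) ∣ Nat.gcd a b := Nat.dvd_gcd h2a h2b
          rw [hab] at this; omega
        have hA1 : A = 1 := by
          rcases zmod2_cases A with h | h
          exacts [absurd h hAne, h]
        have hFne : F ≠ 0 := fun h => claim1 ⟨hB0, h⟩
        refine ⟨E' + 1, ?_, ?_⟩
        · rw [hB0, zero_mul, zero_add]; exact hFne
        · rw [hA1, one_mul]
          exact zmod2_add1 E'
    · -- 2 ∤ a*b : N even, A = B = 1, F = E'
      have hN0 : (N : ZMod 2) = 0 := (castdvd N).mpr (hNpar h2)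
      have hAne : A ≠ 0 := fun h => h2 (Dvd.dvd.mul_right (hAa.mp h) b)
      have hBne : B ≠ 0 := fun h => h2 (Dvd.dvd.mul_left (hBb.mp h) a)
      have hA1 : A = 1 := by
        rcases zmod2_cases A with h | h
        exacts [absurd h hAne, h]
      have hB1 : B = 1 := by
        rcases zmod2_cases B with h | h
        exacts [absurd h hBne, h]
      have hFE : F = E' := by
        have h := keyK
        rw [hA1, hB1, hN0, one_mul, one_mul, add_zero] at h
        exact h
      refine ⟨F + 1, ?_, ?_⟩
      · rw [hB1, one_mul]
        exact zmod2_add1 F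
      · rw [hA1, one_mul, ← hFE]
        exact zmod2_add1 F
  · -- p odd
    have hp3 : 3 ≤ p := by
      rcases hp.two_le.lt_or_eq with h | h
      · omega
      · omega
    set v₁ : ZMod p := -F * B⁻¹ with hv₁
    set v₂ : ZMod p := -E' * A⁻¹ with hv₂
    have hcard : ({v₁, v₂} : Finset (ZMod p)).card < Fintype.card (ZMod p) := by
      calc ({v₁, v₂} : Finset (ZMod p)).card ≤ 2 := Finset.card_insert_le _ _ |>.trans (by simp)
        _ < p := by omega
        _ = Fintype.card (ZMod p) := (ZMod.card p).symm
    have hne : (Finset.univ \ ({v₁, v₂} : Finset (ZMod p))).Nonempty := by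
      rw [← Finset.card_pos, Finset.card_sdiff_of_subset (Finset.subset_univ _), Finset.card_univ]
      omega
    obtain ⟨r, hr⟩ := hne
    rw [Finset.mem_sdiff, Finset.mem_insert, Finset.mem_singleton] at hr
    push_neg at hr
    obtain ⟨-, hr1, hr2⟩ := hr
    have sol : ∀ (C D : ZMod p), ¬ (C = 0 ∧ D = 0) → ∀ x : ZMod p, x ≠ -D * C⁻¹ → C * x + D ≠ 0 := by
      intro C D hCD x hx habs
      by_cases hC : C = 0
      · rw [hC, zero_mul, zero_add] at habs
        exact hCD ⟨hC, habs⟩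
      · apply hx
        have hCx : C * x = -D := by linear_combination habs
        rw [← hCx, mul_comm C x, mul_assoc, mul_inv_cancel₀ hC, mul_one]
    exact ⟨r, sol B F claim1 r hr1, sol A E' claim2 r hr2⟩

lemma card_ap (J p c d : ℕ) (hp : p.Prime) (hpc : ¬ p ∣ c) [DecidablePred (fun j => p ∣ c * j + d)] :
    ((Finset.Ico 1 J).filter (fun j => p ∣ c * j + d)).card ≤ J / p + 1 := by
  classical
  have : ((Finset.Ico 1 J).filter (fun j => p ∣ c * j + d)).card ≤ (Finset.range (J / p + 1)).card := by
    apply Finset.card_le_card_of_injOn (fun j => j / p)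
    · intro j hj
      rw [Finset.mem_coe, Finset.mem_filter, Finset.mem_Ico] at hj
      rw [Finset.mem_coe, Finset.mem_range]
      have : j / p ≤ J / p := Nat.div_le_div_right (le_of_lt hj.1.2)
      dsimp only
      omega
    · intro j₁ hj₁ j₂ hj₂ hdiv
      rw [Finset.coe_filter, Set.mem_setOf_eq] at hj₁ hj₂
      obtain ⟨hj₁m, hj₁d⟩ := hj₁
      obtain ⟨hj₂m, hj₂d⟩ := hj₂
      have hdvd : (p : ℤ) ∣ (c : ℤ) * ((j₁ : ℤ) - (j₂ : ℤ)) := by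
        have h1 : (p:ℤ) ∣ (c * j₁ + d : ℕ) := Int.natCast_dvd_natCast.mpr hj₁d
        have h2 : (p:ℤ) ∣ (c * j₂ + d : ℕ) := Int.natCast_dvd_natCast.mpr hj₂d
        push_cast at h1 h2
        have := dvd_sub h1 h2
        rw [show (c:ℤ) * ((j₁:ℤ) - (j₂:ℤ)) = (c:ℤ) * (j₁:ℤ) + (d:ℤ) - ((c:ℤ) * (j₂:ℤ) + (d:ℤ)) by ring]
        exact this
      have hpZ : Prime (p : ℤ) := by
        rw [Int.prime_iff_natAbs_prime]
        simpa using hp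
      rcases hpZ.dvd_mul.mp hdvd with h | h
      · exact absurd (Int.natCast_dvd_natCast.mp h) hpc
      · have hmod : j₂ ≡ j₁ [MOD p] := (Nat.modEq_iff_dvd).mpr (by
          convert h using 1)
        have hdiv' : j₁ / p = j₂ / p := hdiv
        have hmod' : j₂ % p = j₁ % p := hmod
        calc j₁ = p * (j₁ / p) + j₁ % p := (Nat.div_add_mod _ _).symm
          _ = p * (j₂ / p) + j₂ % p := by rw [hdiv', hmod']
          _ = j₂ := Nat.div_add_mod _ _
  simpa using this

lemma exists_fe (a b m N : ℕ) (hbm : 1 < b ^ m) (hab : Nat.Coprime a b)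
    (hN : 0 < N) (hNb : N < b ^ m) (hNa : N ≤ a ^ m) :
    ∃ f e : ℕ, 0 < f ∧ f < b ^ m ∧ a ^ m * f = b ^ m * e + N := by
  haveI : NeZero (b ^ m) := ⟨by omega⟩
  have cop : (a ^ m).Coprime (b ^ m) := Nat.Coprime.pow m m hab
  set u : (ZMod (b ^ m))ˣ := ZMod.unitOfCoprime (a ^ m) cop with hu
  set fz : ZMod (b ^ m) := (↑u⁻¹ : ZMod (b ^ m)) * N with hfz
  refine ⟨fz.val, (a ^ m * fz.val - N) / b ^ m, ?_, ZMod.val_lt fz, ?_⟩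
  · -- fz ≠ 0
    rcases Nat.eq_zero_or_pos fz.val with h | h
    · exfalso
      have h0 : fz = 0 := by
        exact (ZMod.val_eq_zero fz).mp h
      have : (N : ZMod (b ^ m)) = 0 := by
        have : (↑u : ZMod (b ^ m)) * fz = N := by
          rw [hfz, ← mul_assoc]
          rw [← Units.val_mul, mul_inv_cancel]
          simp
        rw [h0, mul_zero] at this
        exact this.symm
      rw [ZMod.natCast_eq_zero_iff] at this
      have := Nat.le_of_dvd hN this
      omega
    · exact h
  · -- key identity
    have hcast : ((a ^ m * fz.val : ℕ) : ZMod (b ^ m)) = (N : ZMod (b ^ m)) := by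
      push_cast
      rw [ZMod.natCast_val, ZMod.cast_id]
      have hcoe : ((a ^ m : ℕ) : ZMod (b ^ m)) = (↑u : ZMod (b ^ m)) :=
        (ZMod.coe_unitOfCoprime _ cop).symm
      push_cast at hcoe
      rw [hcoe, hfz, ← mul_assoc, ← Units.val_mul, mul_inv_cancel]
      simp
    have hmod : a ^ m * fz.val ≡ N [MOD b ^ m] := (ZMod.natCast_eq_natCast_iff _ _ _).mp hcast
    have hfpos : 0 < fz.val := by
      rcases Nat.eq_zero_or_pos fz.val with h | h
      · exfalso
        rw [h, mul_zero] at hmod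
        have : b ^ m ∣ N := (Nat.modEq_zero_iff_dvd).mp hmod.symm
        have := Nat.le_of_dvd hN this
        omega
      · exact h
    have hle : N ≤ a ^ m * fz.val := le_trans hNa (Nat.le_mul_of_pos_right _ hfpos)
    have hdvd : b ^ m ∣ a ^ m * fz.val - N := (Nat.modEq_iff_dvd' hle).mp hmod.symm
    have h2 : b ^ m * ((a ^ m * fz.val - N) / b ^ m) = a ^ m * fz.val - N :=
      Nat.mul_div_cancel' hdvd
    omega

set_option maxHeartbeats 2000000 in
/-- Case 1 of the proof of Theorem 1: for a set `E` of primes with convergent sum of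
reciprocals and a non-integer rational `α = a/b > 1` in lowest terms, for every `δ > 0`
there are a positive integer `m` and positive integers `x, y` free of prime factors from
`E` with `0 < |αᵐ·x − y| < δ`. -/
theorem stmt_8 (E : Set ℕ) (hE : ∀ p ∈ E, p.Prime)
    (hsum : Summable (fun p : E => (1 : ℝ) / ((p : ℕ) : ℝ)))
    (a b : ℕ) (ha : 0 < a) (hb : 1 < b) (hab : Nat.Coprime a b)
    (α : ℝ) (hα : α = (a : ℝ) / (b : ℝ)) (hα1 : 1 < α) :
    ∀ δ > 0, ∃ m x y : ℕ, 0 < m ∧ 0 < x ∧ 0 < y ∧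
      (∀ p ∈ E, ¬ p ∣ x) ∧ (∀ p ∈ E, ¬ p ∣ y) ∧
      0 < |α ^ m * (x : ℝ) - (y : ℝ)| ∧ |α ^ m * (x : ℝ) - (y : ℝ)| < δ := by
  classical
  intro δ hδ
  have hb0R : (0:ℝ) < (b:ℝ) := by exact_mod_cast Nat.lt_of_lt_of_le Nat.zero_lt_one hb.le
  have hba : b < a := by
    have h1 : (1:ℝ) < (a:ℝ)/(b:ℝ) := hα ▸ hα1
    have h2 := (one_lt_div hb0R).mp h1
    exact_mod_cast h2
  -- choose m
  have hbR : (1:ℝ) < (b:ℝ) := by exact_mod_cast hb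
  obtain ⟨m, hm⟩ := pow_unbounded_of_one_lt (max (2/δ) 2) hbR
  have h2bm : (2:ℝ) < (b:ℝ)^m := lt_of_le_of_lt (le_max_right _ _) hm
  have hδbm : 2/δ < (b:ℝ)^m := lt_of_le_of_lt (le_max_left _ _) hm
  have hmpos : 0 < m := by
    by_contra h
    push_neg at h
    have hm0 : m = 0 := by omega
    rw [hm0, pow_zero] at h2bm
    linarith
  have hbm2 : 2 < b ^ m := by
    have hcast : ((b^m : ℕ):ℝ) = (b:ℝ)^m := by push_cast; ring
    have : (2:ℝ) < ((b^m : ℕ):ℝ) := by rw [hcast]; exact h2bm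
    exact_mod_cast this
  have hbm1 : 1 < b ^ m := by omega
  -- N
  set N := if 2 ∣ a*b then 1 else 2 with hNdef
  have hN0 : 0 < N := by rw [hNdef]; split <;> norm_num
  have hN2 : N ≤ 2 := by rw [hNdef]; split <;> norm_num
  have hNq : ∀ q : ℕ, q.Prime → q ∣ a*b → ¬ q ∣ N := by
    intro q hq hqab hqN
    rw [hNdef] at hqN
    by_cases h : 2 ∣ a*b
    · rw [if_pos h] at hqN
      have h1 := Nat.le_of_dvd one_pos hqN
      have h2 := hq.two_le
      omega
    · rw [if_neg h] at hqN
      have : q = 2 := (Nat.prime_dvd_prime_iff_eq hq Nat.prime_two).mp hqN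
      exact h (this ▸ hqab)
  have hNpar : ¬ 2 ∣ a*b → 2 ∣ N := fun h => by rw [hNdef, if_neg h]
  have hNa : N ≤ a ^ m := by
    have h1 : a ≤ a ^ m := Nat.le_self_pow hmpos.ne' a
    omega
  obtain ⟨f, e, hf0, hflt, key⟩ := exists_fe a b m N hbm1 hab hN0 (by omega) hNa
  -- P₁
  obtain ⟨P₁', hP₁'⟩ := tail_small E hsum (1/8) (by norm_num)
  set P₁ := max P₁' (a + b) with hP₁def
  -- small primes
  set smallE := (Finset.range (P₁+1)).filter (· ∈ E) with hsmallEdef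
  have hsmallE_prime : ∀ p ∈ smallE, p.Prime := fun p hp => hE p (Finset.mem_filter.mp hp).2
  set W := ∏ p ∈ smallE, p with hWdef
  have hW1 : 1 ≤ W := Finset.prod_pos (fun p hp => (hsmallE_prime p hp).pos)
  obtain ⟨k₀, hk₀⟩ := crt_finset smallE hsmallE_prime
      (fun p k => ¬ p ∣ (b^m*k+f) ∧ ¬ p ∣ (a^m*k+e))
      (by
        rintro p k k' hkk ⟨h1, h2⟩
        constructor
        · rw [← modeq_dvd_iff ((hkk.mul_left (b^m)).add_right f)]
          exact h1
        · rw [← modeq_dvd_iff ((hkk.mul_left (a^m)).add_right e)]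
          exact h2)
      (fun p hp => exists_good_res p (hsmallE_prime p hp) a b m f e N hmpos hab key hNq hNpar)
  -- constants
  set C₀ := (a^m + b^m) * (k₀ + W) + e + f with hC₀def
  have hC₀pos : 0 < C₀ := by omega
  obtain ⟨P₂', hP₂'⟩ := tail_small E hsum (1/(16*C₀)) (by positivity)
  set P₂ := max P₂' P₁ with hP₂def
  set J := 8 * (P₂ + 8) with hJdef
  have hJ1 : 1 ≤ J := by omega
  set S := (Finset.Ioc P₁ (C₀*J)).filter (· ∈ E) with hSdef
  set c₁ := b^m*W with hc₁def
  set d₁ := b^m*k₀+f with hd₁def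
  set c₂ := a^m*W with hc₂def
  set d₂ := a^m*k₀+e with hd₂def
  -- main counting claim
  have main : ∃ j ∈ Finset.Ico 1 J, ∀ p ∈ S, ¬ p ∣ (c₁*j+d₁) ∧ ¬ p ∣ (c₂*j+d₂) := by
    by_contra hcon
    push_neg at hcon
    have hSfacts : ∀ p ∈ S, p.Prime ∧ P₁ < p ∧ p ≤ C₀*J ∧ p ∈ E := by
      intro p hpS
      rw [hSdef, Finset.mem_filter, Finset.mem_Ioc] at hpS
      exact ⟨hE p hpS.2, hpS.1.1, hpS.1.2, hpS.2⟩
    have hsub : Finset.Ico 1 J ⊆ S.biUnion (fun p => (Finset.Ico 1 J).filter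
        (fun j' => p ∣ c₁*j'+d₁ ∨ p ∣ c₂*j'+d₂)) := by
      intro j hj
      obtain ⟨p, hpS, hor⟩ := hcon j hj
      refine Finset.mem_biUnion.mpr ⟨p, hpS, Finset.mem_filter.mpr ⟨hj, ?_⟩⟩
      by_cases h : p ∣ c₁*j+d₁
      · exact Or.inl h
      · exact Or.inr (hor h)
    have hcard1 : J - 1 ≤ ∑ p ∈ S, ((Finset.Ico 1 J).filter
        (fun j' => p ∣ c₁*j'+d₁ ∨ p ∣ c₂*j'+d₂)).card := by
      calc J - 1 = (Finset.Ico 1 J).card := by rw [Nat.card_Ico]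
        _ ≤ _ := le_trans (Finset.card_le_card hsub) Finset.card_biUnion_le
    have hcard2 : ∀ p ∈ S, ((Finset.Ico 1 J).filter
        (fun j' => p ∣ c₁*j'+d₁ ∨ p ∣ c₂*j'+d₂)).card ≤ (J/p+1) + (J/p+1) := by
      intro p hpS
      obtain ⟨hp, hpP₁, hpCJ, hpE⟩ := hSfacts p hpS
      have hPab : a + b ≤ P₁ := le_max_right _ _
      have hpb : ¬ p ∣ b := fun h => absurd (Nat.le_of_dvd (by omega) h) (by omega)
      have hpa : ¬ p ∣ a := fun h => absurd (Nat.le_of_dvd (by omega) h) (by omega)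
      have hpW : ¬ p ∣ W := by
        intro h
        rw [hWdef] at h
        obtain ⟨q, hq, hpq⟩ := (Prime.dvd_finset_prod_iff hp.prime (fun q : ℕ => q)).mp h
        have hqprime := hsmallE_prime q hq
        have hpq' : p = q := (Nat.prime_dvd_prime_iff_eq hp hqprime).mp hpq
        have hqle : q < P₁ + 1 := by
          have := (Finset.mem_filter.mp hq).1
          rwa [Finset.mem_range] at this
        omega
      have hc₁ : ¬ p ∣ c₁ := by
        rw [hc₁def]
        intro h
        rcases (Nat.Prime.dvd_mul hp).mp h with h' | h'
        · exact hpb (hp.dvd_of_dvd_pow h')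
        · exact hpW h'
      have hc₂ : ¬ p ∣ c₂ := by
        rw [hc₂def]
        intro h
        rcases (Nat.Prime.dvd_mul hp).mp h with h' | h'
        · exact hpa (hp.dvd_of_dvd_pow h')
        · exact hpW h'
      rw [Finset.filter_or]
      exact le_trans (Finset.card_union_le _ _)
        (Nat.add_le_add (card_ap J p c₁ d₁ hp hc₁) (card_ap J p c₂ d₂ hp hc₂))
    -- move to the reals
    have hsum1 : ∑ p ∈ S, (1:ℝ)/(p:ℝ) < 1/8 := by
      apply hP₁' S
      intro q hq
      have h1 := (hSfacts q hq).2.1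
      have h2 : P₁' ≤ P₁ := le_max_left _ _
      exact ⟨(hSfacts q hq).2.2.2, by omega⟩
    have hcast1 : ((J:ℝ) - 1) ≤ ∑ p ∈ S, (2*(J:ℝ)*(1/(p:ℝ)) + 2) := by
      have h0 : ((J - 1 : ℕ) : ℝ) = (J:ℝ) - 1 := by
        rw [Nat.cast_sub hJ1]; norm_num
      calc (J:ℝ) - 1 = ((J-1:ℕ):ℝ) := h0.symm
        _ ≤ ((∑ p ∈ S, ((Finset.Ico 1 J).filter
              (fun j' => p ∣ c₁*j'+d₁ ∨ p ∣ c₂*j'+d₂)).card : ℕ) : ℝ) := by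
            exact_mod_cast hcard1
        _ ≤ ((∑ p ∈ S, ((J/p+1)+(J/p+1)) : ℕ) : ℝ) := by
            exact_mod_cast Finset.sum_le_sum hcard2
        _ = ∑ p ∈ S, (((J/p:ℕ):ℝ) + 1 + (((J/p:ℕ):ℝ) + 1)) := by push_cast; ring
        _ ≤ ∑ p ∈ S, (2*(J:ℝ)*(1/(p:ℝ)) + 2) := by
            apply Finset.sum_le_sum
            intro p hpS
            have h2 : ((J/p : ℕ):ℝ) ≤ (J:ℝ)/(p:ℝ) := Nat.cast_div_le
            have h3 : (J:ℝ)/(p:ℝ) = (J:ℝ)*(1/(p:ℝ)) := by ring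
            rw [h3] at h2
            linarith
    have hcardS : (S.card : ℝ) ≤ (P₂:ℝ) + (J:ℝ)/16 := by
      have hsplit := Finset.card_filter_add_card_filter_not
        (s := S) (p := fun p => P₂ < p)
      have hsmall : (S.filter (fun p => ¬ P₂ < p)).card ≤ P₂ := by
        have hsubs : S.filter (fun p => ¬ P₂ < p) ⊆ Finset.Ioc P₁ P₂ := by
          intro p hp
          rw [Finset.mem_filter] at hp
          have h1 := (hSfacts p hp.1).2.1
          have h2 := hp.2
          rw [Finset.mem_Ioc]
          omega
        calc (S.filter (fun p => ¬ P₂ < p)).card ≤ (Finset.Ioc P₁ P₂).card :=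
              Finset.card_le_card hsubs
          _ = P₂ - P₁ := Nat.card_Ioc _ _
          _ ≤ P₂ := by omega
      have hbig : ((S.filter (fun p => P₂ < p)).card : ℝ) ≤ (J:ℝ)/16 := by
        set S₂ := S.filter (fun p => P₂ < p) with hS₂def
        have h2 : ∀ p ∈ S₂, (1:ℝ) ≤ ((C₀*J:ℕ):ℝ) * (1/(p:ℝ)) := by
          intro p hp
          rw [hS₂def, Finset.mem_filter] at hp
          have hfacts := hSfacts p hp.1
          have hppos : (0:ℝ) < (p:ℝ) := by exact_mod_cast hfacts.1.pos
          rw [mul_one_div, le_div_iff₀ hppos, one_mul]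
          exact_mod_cast hfacts.2.2.1
        have h3 : ∑ p ∈ S₂, (1:ℝ)/(p:ℝ) < 1/(16*C₀) := by
          apply hP₂' S₂
          intro q hq
          rw [hS₂def, Finset.mem_filter] at hq
          have h4 : P₂' ≤ P₂ := le_max_left _ _
          have h5 := hq.2
          exact ⟨(hSfacts q hq.1).2.2.2, by omega⟩
        have h6 : (0:ℝ) ≤ ∑ p ∈ S₂, (1:ℝ)/(p:ℝ) := by
          apply Finset.sum_nonneg
          intro p hp
          positivity
        calc ((S₂.card):ℝ) = ∑ _p ∈ S₂, (1:ℝ) := by simp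
          _ ≤ ∑ p ∈ S₂, ((C₀*J:ℕ):ℝ) * (1/(p:ℝ)) := Finset.sum_le_sum h2
          _ = ((C₀*J:ℕ):ℝ) * ∑ p ∈ S₂, (1/(p:ℝ)) := by rw [Finset.mul_sum]
          _ ≤ ((C₀*J:ℕ):ℝ) * (1/(16*C₀)) := by
              apply mul_le_mul_of_nonneg_left h3.le (Nat.cast_nonneg _)
          _ = (J:ℝ)/16 := by
              have hC₀R : (0:ℝ) < (C₀:ℝ) := by exact_mod_cast hC₀pos
              push_cast
              field_simp
      have hcast : (S.card : ℝ) = ((S.filter (fun p => P₂ < p)).card : ℝ)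
          + ((S.filter (fun p => ¬ P₂ < p)).card : ℝ) := by
        exact_mod_cast hsplit.symm
      have hsmallR : ((S.filter (fun p => ¬ P₂ < p)).card : ℝ) ≤ (P₂:ℝ) := by
        exact_mod_cast hsmall
      linarith
    have hsum_eval : ∑ p ∈ S, (2*(J:ℝ)*(1/(p:ℝ)) + 2)
        = 2*(J:ℝ)*(∑ p ∈ S, (1:ℝ)/(p:ℝ)) + 2*(S.card:ℝ) := by
      rw [Finset.sum_add_distrib, ← Finset.mul_sum, Finset.sum_const, nsmul_eq_mul]
      ring
    have hmul : 2*(J:ℝ)*(∑ p ∈ S, (1:ℝ)/(p:ℝ)) ≤ 2*(J:ℝ)*(1/8) := by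
      apply mul_le_mul_of_nonneg_left hsum1.le
      positivity
    have hJR : (J:ℝ) = 8*((P₂:ℝ)+8) := by rw [hJdef]; push_cast; ring
    have hP₂nn : (0:ℝ) ≤ (P₂:ℝ) := Nat.cast_nonneg _
    rw [hsum_eval] at hcast1
    linarith
  obtain ⟨j, hjm, hgood⟩ := main
  rw [Finset.mem_Ico] at hjm
  set k := k₀ + W * j with hkdef
  have hk1 : 1 ≤ k := by
    have : 1 ≤ W * j := Nat.one_le_iff_ne_zero.mpr (by
      have := hjm.1
      positivity)
    omega
  set x := b^m * k + f with hxdef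
  set y := a^m * k + e with hydef
  have hxc : x = c₁*j+d₁ := by rw [hxdef, hkdef, hc₁def, hd₁def]; ring
  have hyc : y = c₂*j+d₂ := by rw [hydef, hkdef, hc₂def, hd₂def]; ring
  have hxpos : 0 < x := by omega
  have hypos : 0 < y := by
    have h1 : 1 ≤ a ^ m := Nat.one_le_pow _ _ (by omega)
    have h2 : 1*1 ≤ a^m * k := Nat.mul_le_mul h1 hk1
    omega
  -- size bounds
  have hkle : k ≤ (k₀ + W) * J := by
    calc k = k₀ + W*j := hkdef
      _ ≤ k₀*J + W*J := Nat.add_le_add (Nat.le_mul_of_pos_right k₀ (by omega)) (Nat.mul_le_mul_left W hjm.2.le)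
      _ = (k₀+W)*J := (add_mul k₀ W J).symm
  have hxle : x ≤ C₀ * J := by
    calc x = b^m * k + f := hxdef
      _ ≤ b^m*((k₀+W)*J) + f*J := Nat.add_le_add (Nat.mul_le_mul_left _ hkle) (Nat.le_mul_of_pos_right f (by omega))
      _ = (b^m*(k₀+W) + f)*J := by ring
      _ ≤ C₀*J := by
          apply Nat.mul_le_mul_right
          have h1 : b^m*(k₀+W) ≤ (a^m+b^m)*(k₀+W) := Nat.mul_le_mul_right _ (Nat.le_add_left _ _)
          omega
  have hyle : y ≤ C₀ * J := by
    calc y = a^m * k + e := hydef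
      _ ≤ a^m*((k₀+W)*J) + e*J := Nat.add_le_add (Nat.mul_le_mul_left _ hkle) (Nat.le_mul_of_pos_right e (by omega))
      _ = (a^m*(k₀+W) + e)*J := by ring
      _ ≤ C₀*J := by
          apply Nat.mul_le_mul_right
          have h1 : a^m*(k₀+W) ≤ (a^m+b^m)*(k₀+W) := Nat.mul_le_mul_right _ (Nat.le_add_right _ _)
          omega
  -- divisibility freeness
  have hdvd_both : ∀ p ∈ E, ¬ p ∣ x ∧ ¬ p ∣ y := by
    intro p hpE
    have hp : p.Prime := hE p hpE
    rcases le_or_gt p P₁ with hple | hpgt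
    · have hpS : p ∈ smallE := Finset.mem_filter.mpr ⟨Finset.mem_range.mpr (by omega), hpE⟩
      have hk₀p := hk₀ p hpS
      have hpW : p ∣ W := Finset.dvd_prod_of_mem (fun q => q) hpS
      have hmodk : k₀ ≡ k [MOD p] := by
        apply (Nat.modEq_iff_dvd' (by omega : k₀ ≤ k)).mpr
        have : k - k₀ = W * j := by omega
        rw [this]
        exact Dvd.dvd.mul_right hpW j
      constructor
      · rw [hxdef, ← modeq_dvd_iff ((hmodk.mul_left (b^m)).add_right f)]
        exact hk₀p.1
      · rw [hydef, ← modeq_dvd_iff ((hmodk.mul_left (a^m)).add_right e)]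
        exact hk₀p.2
    · rcases le_or_gt p (C₀*J) with hle2 | hgt2
      · have hpS : p ∈ S := Finset.mem_filter.mpr ⟨Finset.mem_Ioc.mpr ⟨hpgt, hle2⟩, hpE⟩
        have := hgood p hpS
        rw [← hxc, ← hyc] at this
        exact this
      · constructor
        · intro hdvd
          have := Nat.le_of_dvd hxpos hdvd
          omega
        · intro hdvd
          have := Nat.le_of_dvd hypos hdvd
          omega
  -- numerics
  have hbmR : (0:ℝ) < (b:ℝ)^m := by positivity
  have keyR : (a:ℝ)^m * (f:ℝ) = (b:ℝ)^m*(e:ℝ) + (N:ℝ) := by exact_mod_cast key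
  have hxR : ((x:ℕ):ℝ) = (b:ℝ)^m*(k:ℝ)+(f:ℝ) := by rw [hxdef]; push_cast; ring
  have hyR : ((y:ℕ):ℝ) = (a:ℝ)^m*(k:ℝ)+(e:ℝ) := by rw [hydef]; push_cast; ring
  have identity : α^m * (x:ℝ) - (y:ℝ) = (N:ℝ)/(b:ℝ)^m := by
    rw [hα, div_pow, hxR, hyR, eq_div_iff hbmR.ne']
    field_simp
    ring_nf
    linear_combination keyR
  have hNR : (0:ℝ) < (N:ℝ) := by exact_mod_cast hN0
  have hfrac_pos : (0:ℝ) < (N:ℝ)/(b:ℝ)^m := by positivity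
  have hfrac_lt : (N:ℝ)/(b:ℝ)^m < δ := by
    have h1 : (N:ℝ) ≤ 2 := by exact_mod_cast hN2
    have h2 : (2:ℝ) < δ * (b:ℝ)^m := by
      rw [div_lt_iff₀ hδ] at hδbm
      linarith [hδbm]
    rw [div_lt_iff₀ hbmR]
    linarith
  refine ⟨m, x, y, hmpos, hxpos, hypos, fun p hp => (hdvd_both p hp).1,
    fun p hp => (hdvd_both p hp).2, ?_, ?_⟩
  · rw [identity, abs_of_pos hfrac_pos]
    exact hfrac_pos
  · rw [identity, abs_of_pos hfrac_pos]
    exact hfrac_lt
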